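/- For every f ∈ M and every ξ ≥ α₀, the quantity F₂(ξ,f) satisfies the two-sided bound exp(−a·N₂ᴹ/((β−σ−1)·L₂ₘ·α₀^{β−σ−2}))·(α₀^{−β} − ξ^{−β})/(L₂ᴹ·β) ≤ F₂(ξ,f) ≤ (α₀^{−β} − ξ^{−β})/(β·L₂ₘ). -/

import Mathlib

open Real Set Filter MeasureTheory Topology

noncomputable section

/-- Membership in the space `M`: bounded continuous on `[α₀,∞)`, `f(α₀)=0`, `f(∞)=−1`. -/
def MemM (α₀ : ℝ) (f : ℝ → ℝ) : Prop :=
  ContinuousOn f (Ici α₀) ∧ (∃ C : ℝ, ∀ ξ ∈ Ici α₀, |f ξ| ≤ C) ∧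
    f α₀ = 0 ∧ Tendsto f atTop (nhds (-1))

/-- `E₂(ξ,f) = exp(−α₀·a·∫_{α₀}^{ξ} N*(f)(s)/L*(f)(s) ds)`. -/
def E2 (α₀ a : ℝ) (Lstar Nstar : (ℝ → ℝ) → ℝ → ℝ) (f : ℝ → ℝ) (ξ : ℝ) : ℝ :=
  Real.exp (-(α₀ * a * ∫ s in α₀..ξ, Nstar f s / Lstar f s))

/-- `F₂(ξ,f) = ∫_{α₀}^{ξ} E₂(s,f)/(s·L*(f)(s)) ds`. -/
def F2 (α₀ a : ℝ) (Lstar Nstar : (ℝ → ℝ) → ℝ → ℝ) (f : ℝ → ℝ) (ξ : ℝ) : ℝ :=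
  ∫ s in α₀..ξ, E2 α₀ a Lstar Nstar f s / (s * Lstar f s)

theorem statement3
    (α₀ a β σ L2m L2M N2m N2M : ℝ)
    (hα₀ : 0 < α₀) (ha : 0 < a)
    (hβpos : 0 < β) (hσpos : 0 < σ) (hL2m : 0 < L2m) (hL2M : 0 < L2M)
    (hN2m : 0 < N2m) (hN2M : 0 < N2M)
    (hβ : σ + 2 < β) (hLmM : L2m ≤ L2M) (hNmM : N2m ≤ N2M)
    (Lstar Nstar : (ℝ → ℝ) → ℝ → ℝ)
    (hLcont : ∀ f : ℝ → ℝ, MemM α₀ f → ContinuousOn (Lstar f) (Ici α₀))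
    (hNcont : ∀ f : ℝ → ℝ, MemM α₀ f → ContinuousOn (Nstar f) (Ici α₀))
    (hLbd : ∀ f : ℝ → ℝ, MemM α₀ f → ∀ ξ ∈ Ici α₀,
      L2m * ξ ^ β ≤ Lstar f ξ ∧ Lstar f ξ ≤ L2M * ξ ^ β)
    (hNbd : ∀ f : ℝ → ℝ, MemM α₀ f → ∀ ξ ∈ Ici α₀,
      N2m * ξ ^ σ ≤ Nstar f ξ ∧ Nstar f ξ ≤ N2M * ξ ^ σ)
    (f : ℝ → ℝ) (hf : MemM α₀ f)
    (ξ : ℝ) (hξ : α₀ ≤ ξ) :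
    Real.exp (-(a * N2M / ((β - σ - 1) * L2m * α₀ ^ (β - σ - 2)))) *
        (α₀ ^ (-β) - ξ ^ (-β)) / (L2M * β) ≤ F2 α₀ a Lstar Nstar f ξ ∧
      F2 α₀ a Lstar Nstar f ξ ≤ (α₀ ^ (-β) - ξ ^ (-β)) / (β * L2m) := by
  have hL := hLbd f hf
  have hN := hNbd f hf
  have hβσ : (0:ℝ) < β - σ - 1 := by linarith
  have hLpos : ∀ s ∈ Ici α₀, 0 < Lstar f s := fun s hs =>
    lt_of_lt_of_le (mul_pos hL2m (Real.rpow_pos_of_pos (lt_of_lt_of_le hα₀ hs) β)) (hL s hs).1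
  have hNpos : ∀ s ∈ Ici α₀, 0 < Nstar f s := fun s hs =>
    lt_of_lt_of_le (mul_pos hN2m (Real.rpow_pos_of_pos (lt_of_lt_of_le hα₀ hs) σ)) (hN s hs).1
  set h : ℝ → ℝ := fun s => Nstar f s / Lstar f s with hh
  have hcont : ContinuousOn h (Ici α₀) :=
    (hNcont f hf).div (hLcont f hf) (fun s hs => (hLpos s hs).ne')
  have hInt : ∀ s, α₀ ≤ s → IntervalIntegrable h volume α₀ s := by
    intro s hs
    apply ContinuousOn.intervalIntegrable
    apply hcont.mono
    rw [uIcc_of_le hs]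
    exact Icc_subset_Ici_self
  -- nonnegativity of the inner integral
  have hI0 : ∀ s, α₀ ≤ s → 0 ≤ ∫ t in α₀..s, h t := by
    intro s hs
    apply intervalIntegral.integral_nonneg hs
    intro t ht
    exact div_nonneg (le_of_lt (hNpos t ht.1)) (le_of_lt (hLpos t ht.1))
  -- upper bound of the inner integral
  set K : ℝ := a * N2M / ((β - σ - 1) * L2m * α₀ ^ (β - σ - 2)) with hK
  have hIK : ∀ s, α₀ ≤ s → α₀ * a * ∫ t in α₀..s, h t ≤ K := by
    intro s hs
    have hg1int : IntervalIntegrable (fun t => (N2M / L2m) * t ^ (σ - β)) volume α₀ s := by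
      apply ContinuousOn.intervalIntegrable
      apply ContinuousOn.mul continuousOn_const
      apply ContinuousOn.rpow_const continuousOn_id
      intro t ht
      rw [uIcc_of_le hs] at ht
      exact Or.inl (ne_of_gt (lt_of_lt_of_le hα₀ ht.1))
    have hmono : ∫ t in α₀..s, h t ≤ ∫ t in α₀..s, (N2M / L2m) * t ^ (σ - β) := by
      apply intervalIntegral.integral_mono_on hs (hInt s hs) hg1int
      intro t ht
      have htpos : 0 < t := lt_of_lt_of_le hα₀ ht.1
      have heq : (N2M / L2m) * t ^ (σ - β) = N2M * t ^ σ / (L2m * t ^ β) := by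
        rw [Real.rpow_sub htpos, div_mul_div_comm]
      rw [heq]
      exact div_le_div₀ (by positivity) (hN t ht.1).2 (by positivity) (hL t ht.1).1
    have hcalc : ∫ t in α₀..s, (N2M / L2m) * t ^ (σ - β)
        = (N2M / L2m) * ((s ^ (σ - β + 1) - α₀ ^ (σ - β + 1)) / (σ - β + 1)) := by
      rw [intervalIntegral.integral_const_mul, integral_rpow]
      right
      constructor
      · intro hcon; linarith [hcon]
      · rw [uIcc_of_le hs]
        intro h0
        exact absurd h0.1 (not_le.2 hα₀)
    have hspos : (0:ℝ) < s ^ (σ - β + 1) := Real.rpow_pos_of_pos (lt_of_lt_of_le hα₀ hs) _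
    have hdiv : (s ^ (σ - β + 1) - α₀ ^ (σ - β + 1)) / (σ - β + 1)
        ≤ α₀ ^ (σ - β + 1) / (β - σ - 1) := by
      have e1 : (s ^ (σ - β + 1) - α₀ ^ (σ - β + 1)) / (σ - β + 1)
          = (α₀ ^ (σ - β + 1) - s ^ (σ - β + 1)) / (β - σ - 1) := by
        have : σ - β + 1 = -(β - σ - 1) := by ring
        rw [this, div_neg, ← neg_div, neg_sub]
      rw [e1]
      gcongr
      linarith
    have e2 : α₀ * a * ((N2M / L2m) * (α₀ ^ (σ - β + 1) / (β - σ - 1))) = K := by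
      have e3 : α₀ * α₀ ^ (σ - β + 1) * α₀ ^ (β - σ - 2) = 1 := by
        have e4 : α₀ * α₀ ^ (σ - β + 1) * α₀ ^ (β - σ - 2)
            = α₀ ^ ((1:ℝ)) * α₀ ^ (σ - β + 1) * α₀ ^ (β - σ - 2) := by
          rw [Real.rpow_one]
        rw [e4, ← Real.rpow_add hα₀, ← Real.rpow_add hα₀]
        have : (1:ℝ) + (σ - β + 1) + (β - σ - 2) = 0 := by ring
        rw [this, Real.rpow_zero]
      rw [hK]
      have hα₀q : (0:ℝ) < α₀ ^ (β - σ - 2) := Real.rpow_pos_of_pos hα₀ _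
      field_simp
      linear_combination e3
    calc α₀ * a * ∫ t in α₀..s, h t
        ≤ α₀ * a * ((N2M / L2m) * ((s ^ (σ - β + 1) - α₀ ^ (σ - β + 1)) / (σ - β + 1))) := by
          rw [← hcalc]
          exact mul_le_mul_of_nonneg_left hmono (by positivity)
      _ ≤ α₀ * a * ((N2M / L2m) * (α₀ ^ (σ - β + 1) / (β - σ - 1))) := by
          apply mul_le_mul_of_nonneg_left _ (by positivity)
          exact mul_le_mul_of_nonneg_left hdiv (by positivity)
      _ = K := e2
  set c : ℝ := Real.exp (-K) with hc
  -- bounds on E2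
  have hE2ub : ∀ s, α₀ ≤ s → E2 α₀ a Lstar Nstar f s ≤ 1 := by
    intro s hs
    rw [E2, ← Real.exp_zero]
    apply Real.exp_le_exp.2
    simp only [neg_nonpos]
    exact mul_nonneg (by positivity) (hI0 s hs)
  have hE2lb : ∀ s, α₀ ≤ s → c ≤ E2 α₀ a Lstar Nstar f s := by
    intro s hs
    rw [E2, hc]
    exact Real.exp_le_exp.2 (neg_le_neg (hIK s hs))
  -- continuity of the F2 integrand
  have hIccsub : Icc α₀ ξ ⊆ Ici α₀ := Icc_subset_Ici_self
  have hprim : ContinuousOn (fun s => ∫ t in α₀..s, h t) (Icc α₀ ξ) := by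
    have : IntegrableOn h (uIcc α₀ ξ) volume := by
      rw [uIcc_of_le hξ]
      exact (hcont.mono hIccsub).integrableOn_Icc
    have := intervalIntegral.continuousOn_primitive_interval this
    rwa [uIcc_of_le hξ] at this
  have hE2cont : ContinuousOn (fun s => E2 α₀ a Lstar Nstar f s) (Icc α₀ ξ) := by
    simp only [E2]
    exact Real.continuous_exp.comp_continuousOn ((continuousOn_const.mul hprim).neg)
  have hFcont : ContinuousOn (fun s => E2 α₀ a Lstar Nstar f s / (s * Lstar f s)) (Icc α₀ ξ) := by
    apply hE2cont.div (continuousOn_id.mul ((hLcont f hf).mono hIccsub))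
    intro s hs
    have : 0 < s * Lstar f s :=
      mul_pos (lt_of_lt_of_le hα₀ hs.1) (hLpos s (hIccsub hs))
    exact this.ne'
  have hFint : IntervalIntegrable (fun s => E2 α₀ a Lstar Nstar f s / (s * Lstar f s))
      volume α₀ ξ := by
    apply ContinuousOn.intervalIntegrable
    rwa [uIcc_of_le hξ]
  -- comparison functions
  have hrcont : ∀ C : ℝ, IntervalIntegrable (fun s => C * s ^ (-(β+1))) volume α₀ ξ := by
    intro C
    apply ContinuousOn.intervalIntegrable
    apply ContinuousOn.mul continuousOn_const
    apply ContinuousOn.rpow_const continuousOn_id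
    intro t ht
    rw [uIcc_of_le hξ] at ht
    exact Or.inl (ne_of_gt (lt_of_lt_of_le hα₀ ht.1))
  have hrval : ∫ s in α₀..ξ, s ^ (-(β+1)) = (α₀ ^ (-β) - ξ ^ (-β)) / β := by
    rw [integral_rpow]
    · have e : -(β+1) + 1 = -β := by ring
      rw [e, div_neg, ← neg_div, neg_sub]
    · right
      constructor
      · intro hcon; linarith [hcon]
      · rw [uIcc_of_le hξ]
        intro h0
        exact absurd h0.1 (not_le.2 hα₀)
  -- pointwise bounds on the F2 integrand
  have hden : ∀ s ∈ Icc α₀ ξ, 0 < s ∧ s ^ (β+1) = s ^ β * s := by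
    intro s hs
    have hspos : 0 < s := lt_of_lt_of_le hα₀ hs.1
    exact ⟨hspos, Real.rpow_add_one hspos.ne' β⟩
  have hup : ∀ s ∈ Icc α₀ ξ,
      E2 α₀ a Lstar Nstar f s / (s * Lstar f s) ≤ (1/L2m) * s ^ (-(β+1)) := by
    intro s hs
    obtain ⟨hspos, hsplit⟩ := hden s hs
    have heq : (1/L2m) * s ^ (-(β+1)) = 1 / (L2m * s ^ (β+1)) := by
      rw [Real.rpow_neg hspos.le, one_div, one_div, mul_inv]
    rw [heq]
    apply div_le_div₀ zero_le_one (hE2ub s hs.1) (by positivity)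
    calc L2m * s ^ (β+1) = s * (L2m * s ^ β) := by rw [hsplit]; ring
      _ ≤ s * Lstar f s := mul_le_mul_of_nonneg_left (hL s (hIccsub hs)).1 hspos.le
  have hlo : ∀ s ∈ Icc α₀ ξ,
      (c/L2M) * s ^ (-(β+1)) ≤ E2 α₀ a Lstar Nstar f s / (s * Lstar f s) := by
    intro s hs
    obtain ⟨hspos, hsplit⟩ := hden s hs
    have heq : (c/L2M) * s ^ (-(β+1)) = c / (L2M * s ^ (β+1)) := by
      rw [Real.rpow_neg hspos.le, mul_comm L2M, ← div_div]
      ring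
    rw [heq]
    apply div_le_div₀ (Real.exp_pos _).le (hE2lb s hs.1)
      (mul_pos hspos (hLpos s (hIccsub hs)))
    calc s * Lstar f s ≤ s * (L2M * s ^ β) :=
          mul_le_mul_of_nonneg_left (hL s (hIccsub hs)).2 hspos.le
      _ = L2M * s ^ (β+1) := by rw [hsplit]; ring
  constructor
  · have := intervalIntegral.integral_mono_on hξ (hrcont (c/L2M)) hFint hlo
    rw [intervalIntegral.integral_const_mul, hrval] at this
    calc Real.exp (-(a * N2M / ((β - σ - 1) * L2m * α₀ ^ (β - σ - 2)))) *
          (α₀ ^ (-β) - ξ ^ (-β)) / (L2M * β)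
        = (c/L2M) * ((α₀ ^ (-β) - ξ ^ (-β)) / β) := by rw [hc, hK]; ring
      _ ≤ F2 α₀ a Lstar Nstar f ξ := this
  · have := intervalIntegral.integral_mono_on hξ hFint (hrcont (1/L2m)) hup
    rw [intervalIntegral.integral_const_mul, hrval] at this
    calc F2 α₀ a Lstar Nstar f ξ ≤ (1/L2m) * ((α₀ ^ (-β) - ξ ^ (-β)) / β) := this
      _ = (α₀ ^ (-β) - ξ ^ (-β)) / (β * L2m) := by ring
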